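/- Let W ⊆ C^ω be a prefix-independent winning condition. For every two-player win/lose game G using colors C and winning condition W, there exists a Player-0 memoryless strategy σ such that W₀ᵐ(G,σ) = W₀ᵐ(G), and likewise there exists a Player-1 memoryless strategy τ such that W₁ᵐ(G,τ) = W₁ᵐ(G). -/

import Mathlib

/-- A run in the graph `(V, E)`: an infinite `E`-path. -/
def IsRun {V : Type*} (E : Set (V × V)) (ρ : ℕ → V) : Prop :=
  ∀ n, (ρ n, ρ (n + 1)) ∈ E

/-- A run is compatible with a strategy `σ` of the player controlling `Vi`. -/
def Compatible {V : Type*} (Vi : Set V) (σ : V → V) (ρ : ℕ → V) : Prop :=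
  ∀ n, ρ n ∈ Vi → ρ (n + 1) = σ (ρ n)

/-- A memoryless strategy for the player controlling `Vi` (encoded as a total
function whose values matter only on `Vi`). -/
def IsStrategy {V : Type*} (Vi : Set V) (E : Set (V × V)) (σ : V → V) : Prop :=
  ∀ v ∈ Vi, (v, σ v) ∈ E

/-- The strategy `σ` of the player controlling `Vi` whose winning condition is
`Win` wins from `v`: every compatible run from `v` has its color sequence in `Win`. -/
def WinsFrom {V : Type*} {C : Type*} (Vi : Set V) (E : Set (V × V)) (π : V → C)
    (Win : Set (ℕ → C)) (σ : V → V) (v : V) : Prop :=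
  ∀ ρ : ℕ → V, ρ 0 = v → IsRun E ρ → Compatible Vi σ ρ → (fun n => π (ρ n)) ∈ Win

/-- `Wᵢᵐ(G, σ)`: the vertices from which `σ` wins. -/
def WinRegion {V : Type*} {C : Type*} (Vi : Set V) (E : Set (V × V)) (π : V → C)
    (Win : Set (ℕ → C)) (σ : V → V) : Set V :=
  {v | WinsFrom Vi E π Win σ v}

/-- `Wᵢᵐ(G)`: the vertices from which some memoryless strategy wins. -/
def WinRegionAll {V : Type*} {C : Type*} (Vi : Set V) (E : Set (V × V)) (π : V → C)
    (Win : Set (ℕ → C)) : Set V :=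
  {v | ∃ σ, IsStrategy Vi E σ ∧ WinsFrom Vi E π Win σ v}

/-- Concatenation `w·ρ` of a finite word and an infinite sequence. -/
def ListAppend {C : Type*} (w : List C) (ρ : ℕ → C) : ℕ → C :=
  fun n => if h : n < w.length then w.get ⟨n, h⟩ else ρ (n - w.length)

/-- `W` is prefix-independent: `wρ ∈ W ↔ ρ ∈ W`. -/
def PrefixIndependent {C : Type*} (W : Set (ℕ → C)) : Prop :=
  ∀ (w : List C) (ρ : ℕ → C), ListAppend w ρ ∈ W ↔ ρ ∈ W

/-- Uniform memoryless determinacy of the game `⟨V₀, V₁, E, π, W⟩`. -/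
def UniformlyDetermined {V : Type*} {C : Type*} (V0 V1 : Set V) (E : Set (V × V))
    (π : V → C) (W : Set (ℕ → C)) : Prop :=
  ∃ σ τ, IsStrategy V0 E σ ∧ IsStrategy V1 E τ ∧
    WinRegion V0 E π W σ ∪ WinRegion V1 E π Wᶜ τ = Set.univ

/-- Auxiliary: uniform memoryless strategy for a single player. -/
theorem key_uniform {V C : Type*} (Vi : Set V) (E : Set (V × V)) (π : V → C)
    (Win : Set (ℕ → C)) (hE : ∀ v : V, ∃ u, (v, u) ∈ E)
    (hW : PrefixIndependent Win) :
    ∃ σ, IsStrategy Vi E σ ∧ WinRegion Vi E π Win σ = WinRegionAll Vi E π Win := by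
  classical
  set r : (V → V) → (V → V) → Prop := WellOrderingRel with hr
  have wo : IsWellOrder (V → V) r := by rw [hr]; infer_instance
  have wf : WellFounded r := wo.wf
  set Good : V → (V → V) → Prop :=
    fun v τ => IsStrategy Vi E τ ∧ WinsFrom Vi E π Win τ v with hGood
  have hRegion : ∀ v, v ∈ WinRegionAll Vi E π Win ↔ {τ | Good v τ}.Nonempty := by
    intro v; exact Iff.rfl
  set pick : V → (V → V) := fun v =>
    if h : v ∈ WinRegionAll Vi E π Win then wf.min {τ | Good v τ} ((hRegion v).mp h)
    else (fun u => Classical.choose (hE u)) with hpick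
  have mem_good : ∀ v, v ∈ WinRegionAll Vi E π Win → Good v (pick v) := by
    intro v hv
    simp only [hpick, dif_pos hv]
    exact wf.min_mem _ ((hRegion v).mp hv)
  have pick_min : ∀ v, v ∈ WinRegionAll Vi E π Win → ∀ τ, Good v τ → ¬ r τ (pick v) := by
    intro v hv τ hτ
    simp only [hpick, dif_pos hv]
    exact wf.not_lt_min _ hτ
  set σ : V → V := fun v => pick v v with hσ
  have hstrat : IsStrategy Vi E σ := by
    intro v hv
    by_cases h : v ∈ WinRegionAll Vi E π Win
    · exact (mem_good v h).1 v hv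
    · simp only [hσ, hpick, dif_neg h]
      exact Classical.choose_spec (hE v)
  -- step lemma: a winning strategy keeps winning after one move
  have step : ∀ (τ : V → V) (v u : V), Good v τ → (v, u) ∈ E →
      (v ∉ Vi ∨ u = τ v) → Good u τ := by
    rintro τ v u ⟨hstr, hwin⟩ hedge hcase
    refine ⟨hstr, ?_⟩
    intro ρ h0 hrun hcomp
    set ρ' : ℕ → V := fun n => Nat.rec v (fun k _ => ρ k) n with hρ'
    have h'0 : ρ' 0 = v := rfl
    have h'succ : ∀ n, ρ' (n + 1) = ρ n := fun n => rfl
    have hrun' : IsRun E ρ' := by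
      intro n
      cases n with
      | zero => rw [h'0, h'succ, h0]; exact hedge
      | succ k => rw [h'succ, h'succ]; exact hrun k
    have hcomp' : Compatible Vi τ ρ' := by
      intro n hn
      cases n with
      | zero =>
        rcases hcase with h | h
        · exact absurd (h'0 ▸ hn) h
        · rw [h'succ, h0, h'0, h]
      | succ k =>
        rw [h'succ, h'succ]
        exact hcomp k (by rw [← h'succ]; exact hn)
    have hmem := hwin ρ' h'0 hrun' hcomp'
    have heq : (fun n => π (ρ' n)) = ListAppend [π v] (fun n => π (ρ n)) := by
      funext n
      cases n with
      | zero => simp [ListAppend, h'0]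
      | succ k => simp [ListAppend, h'succ]
    rw [heq] at hmem
    exact (hW [π v] _).mp hmem
  refine ⟨σ, hstrat, ?_⟩
  ext v
  constructor
  · intro hv
    exact ⟨σ, hstrat, hv⟩
  · intro hv
    intro ρ h0 hrun hcomp
    -- every vertex on the run stays in the region and pick does not increase
    have stepR : ∀ n, ρ n ∈ WinRegionAll Vi E π Win →
        ρ (n + 1) ∈ WinRegionAll Vi E π Win ∧
          ¬ r (pick (ρ n)) (pick (ρ (n + 1))) := by
      intro n hn
      have hg := mem_good _ hn
      have hG : Good (ρ (n + 1)) (pick (ρ n)) := by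
        by_cases hvi : ρ n ∈ Vi
        · refine step _ _ _ hg (hrun n) (Or.inr ?_)
          rw [hcomp n hvi]
        · exact step _ _ _ hg (hrun n) (Or.inl hvi)
      have hmem : ρ (n + 1) ∈ WinRegionAll Vi E π Win := ⟨pick (ρ n), hG.1, hG.2⟩
      exact ⟨hmem, pick_min _ hmem _ hG⟩
    have inv : ∀ n, ρ n ∈ WinRegionAll Vi E π Win := by
      intro n
      induction n with
      | zero => rw [h0]; exact hv
      | succ k ih => exact (stepR k ih).1
    set t : ℕ → (V → V) := fun n => pick (ρ n) with ht
    have chain : ∀ n, ¬ r (t n) (t (n + 1)) := fun n => (stepR n (inv n)).2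
    -- the sequence t is eventually constant
    have hSne : (Set.range t).Nonempty := ⟨t 0, Set.mem_range_self 0⟩
    obtain ⟨N, hN⟩ := wf.min_mem (Set.range t) hSne
    have hconst : ∀ k, t (N + k) = wf.min (Set.range t) hSne := by
      intro k
      induction k with
      | zero => simpa using hN
      | succ j ih =>
        have h1 := chain (N + j)
        rw [ih] at h1
        have h2 : ¬ r (t (N + j + 1)) (wf.min (Set.range t) hSne) :=
          wf.not_lt_min _ (Set.mem_range_self _)
        have h3 := wo.trichotomous (t (N + j + 1)) (wf.min (Set.range t) hSne)
        have : N + (j + 1) = N + j + 1 := rfl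
        rw [this]
        exact h3 h2 h1
    set m : V → V := wf.min (Set.range t) hSne with hm
    have hmwin : Good (ρ N) m := by
      have := mem_good _ (inv N)
      rwa [show pick (ρ N) = m by simpa using hconst 0] at this
    set ρ' : ℕ → V := fun n => ρ (N + n) with hρ'
    have hrun' : IsRun E ρ' := by
      intro n
      have : N + n + 1 = N + (n + 1) := by omega
      simpa [hρ', this] using hrun (N + n)
    have hcomp' : Compatible Vi m ρ' := by
      intro n hn
      have h1 : ρ (N + n + 1) = σ (ρ (N + n)) := hcomp (N + n) hn
      have h2 : σ (ρ (N + n)) = pick (ρ (N + n)) (ρ (N + n)) := rfl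
      have h3 : pick (ρ (N + n)) = m := hconst n
      show ρ (N + (n + 1)) = m (ρ (N + n))
      rw [show N + (n + 1) = N + n + 1 from rfl, h1, h2, h3]
    have hmem' : (fun n => π (ρ' n)) ∈ Win :=
      hmwin.2 ρ' (by simp [hρ']) hrun' hcomp'
    have heq : (fun n => π (ρ n)) =
        ListAppend (List.ofFn fun i : Fin N => π (ρ i)) (fun n => π (ρ' n)) := by
      funext n
      by_cases h : n < N
      · simp [ListAppend, h, List.get_ofFn]
      · have hlen : (List.ofFn fun i : Fin N => π (ρ i)).length = N :=
          List.length_ofFn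
        have h1 : ¬ n < (List.ofFn fun i : Fin N => π (ρ i)).length := by
          rw [hlen]; exact h
        simp only [ListAppend, dif_neg h1, hρ']
        rw [hlen, show N + (n - N) = n by omega]
    rw [heq]
    exact (hW _ _).mpr hmem'

/-- for a game with prefix-independent winning condition, each
player has a single memoryless strategy winning from all of their memoryless
winning region. -/
theorem stmt0 {V C : Type*} [Nonempty C]
    (V0 V1 : Set V) (E : Set (V × V)) (π : V → C) (W : Set (ℕ → C))
    (hdisj : Disjoint V0 V1) (hcover : V0 ∪ V1 = Set.univ)
    (hE : ∀ v : V, ∃ u, (v, u) ∈ E)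
    (hW : PrefixIndependent W) :
    (∃ σ, IsStrategy V0 E σ ∧ WinRegion V0 E π W σ = WinRegionAll V0 E π W) ∧
    (∃ τ, IsStrategy V1 E τ ∧ WinRegion V1 E π Wᶜ τ = WinRegionAll V1 E π Wᶜ) := by
  constructor
  · exact key_uniform V0 E π W hE hW
  · refine key_uniform V1 E π Wᶜ hE ?_
    intro w ρ
    simp only [Set.mem_compl_iff]
    exact not_congr (hW w ρ)
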